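/- Let ω be a nondegenerate alternating bilinear form on a finite-dimensional real vector space V. Then the set of ω-calibrated complex structures {J : J² = −1, ω(J·, J·) = ω, and ω(x, Jx) > 0 for all x ≠ 0} is path-connected. -/

import Mathlib

open scoped RealInnerProductSpace
open ContinuousLinearMap Finset

noncomputable section Aux

variable {E : Type*} [NormedAddCommGroup E] [InnerProductSpace ℝ E]

/-- Diagonal operator w.r.t. an orthonormal basis. -/
def opD {n : ℕ} (b : OrthonormalBasis (Fin n) ℝ E) (c : Fin n → ℝ) : E →L[ℝ] E :=
  ∑ i, c i • (innerSL ℝ (b i)).smulRight (b i)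

lemma opD_apply {n : ℕ} (b : OrthonormalBasis (Fin n) ℝ E) (c : Fin n → ℝ) (x : E) :
    opD b c x = ∑ i, (c i * ⟪b i, x⟫) • b i := by
  simp [opD, ContinuousLinearMap.sum_apply, smul_smul]

lemma inner_bb {n : ℕ} (b : OrthonormalBasis (Fin n) ℝ E) (i j : Fin n) :
    ⟪b i, b j⟫ = if i = j then 1 else 0 :=
  orthonormal_iff_ite.mp b.orthonormal i j

lemma opD_basis {n : ℕ} (b : OrthonormalBasis (Fin n) ℝ E) (c : Fin n → ℝ) (j : Fin n) :
    opD b c (b j) = c j • b j := by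
  rw [opD_apply]
  rw [Finset.sum_eq_single j]
  · simp [inner_bb]
  · intro i _ hij; simp [inner_bb, hij]
  · intro h; simp at h

lemma opD_symm {n : ℕ} (b : OrthonormalBasis (Fin n) ℝ E) (c : Fin n → ℝ) (x y : E) :
    ⟪opD b c x, y⟫ = ⟪x, opD b c y⟫ := by
  rw [opD_apply, opD_apply, sum_inner, inner_sum]
  refine Finset.sum_congr rfl fun i _ => ?_
  rw [real_inner_smul_left, real_inner_smul_right]
  rw [real_inner_comm (b i) x]
  ring

/-- Extensionality for CLMs via an orthonormal basis. -/
lemma clm_ext_basis {n : ℕ} (b : OrthonormalBasis (Fin n) ℝ E) {T S : E →L[ℝ] E}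
    (h : ∀ i, T (b i) = S (b i)) : T = S := by
  apply ContinuousLinearMap.coe_injective
  exact Module.Basis.ext b.toBasis (by simpa using h)

lemma vec_ext_basis {n : ℕ} (b : OrthonormalBasis (Fin n) ℝ E) {x y : E}
    (h : ∀ i, ⟪b i, x⟫ = ⟪b i, y⟫) : x = y := by
  rw [← b.sum_repr' x, ← b.sum_repr' y]
  exact Finset.sum_congr rfl fun i _ => by rw [h i]

/-- Eigenvector lemma: a diagonal operator acts by `g c` on any `c`-eigenvector of `T`,
provided the diagonal entries are `g` of the eigenvalues. -/
lemma opD_eigen {n : ℕ} (b : OrthonormalBasis (Fin n) ℝ E) (μ : Fin n → ℝ)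
    (T : E →ₗ[ℝ] E) (hTsym : ∀ x y, ⟪T x, y⟫ = ⟪x, T y⟫)
    (hTb : ∀ i, T (b i) = μ i • b i)
    (g : ℝ → ℝ) {v : E} {c : ℝ} (hv : T v = c • v) :
    opD b (fun i => g (μ i)) v = g c • v := by
  have key : ∀ i, μ i ≠ c → ⟪b i, v⟫ = 0 := by
    intro i hi
    have h1 : ⟪T (b i), v⟫ = ⟪b i, T v⟫ := hTsym (b i) v
    rw [hTb i, hv, real_inner_smul_left, real_inner_smul_right] at h1
    by_contra h0
    exact hi (mul_right_cancel₀ h0 h1)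
  rw [opD_apply]
  calc ∑ i, (g (μ i) * ⟪b i, v⟫) • b i = ∑ i, (g c * ⟪b i, v⟫) • b i := by
        refine Finset.sum_congr rfl fun i _ => ?_
        by_cases hμ : μ i = c
        · rw [hμ]
        · rw [key i hμ]; simp
    _ = g c • v := by
        simp_rw [mul_smul, ← Finset.smul_sum, b.sum_repr' v]
lemma antisymm_of_alt (Ω : E →ₗ[ℝ] E →ₗ[ℝ] ℝ) (halt : ∀ x, Ω x x = 0) (x y : E) :
    Ω x y = - Ω y x := by
  have h := halt (x + y)
  simp only [map_add, LinearMap.add_apply, halt] at h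
  linarith

variable [FiniteDimensional ℝ E]

lemma stepA {n : ℕ} (hn : Module.finrank ℝ E = n) (Ω : E →ₗ[ℝ] E →ₗ[ℝ] ℝ)
    (halt : ∀ x, Ω x x = 0) (hnd : ∀ x, (∀ y, Ω x y = 0) → x = 0) :
    ∃ (J R R' : E →L[ℝ] E),
      (J * J = -1 ∧ (∀ x y, Ω (J x) (J y) = Ω x y) ∧ (∀ x, x ≠ 0 → 0 < Ω x (J x))) ∧
      (∀ x, R' (R x) = x) ∧ (∀ x, R (R' x) = x) ∧
      (∀ x y, Ω x (J y) = ⟪R x, R y⟫) := by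
  classical
  set m := Module.finrank ℝ E with hm
  let ob : OrthonormalBasis (Fin m) ℝ E := stdOrthonormalBasis ℝ E
  -- the operator representing Ω against the inner product
  let Al : E →ₗ[ℝ] E :=
  { toFun := fun x => ∑ i, Ω x (ob i) • ob i
    map_add' := by
      intro x y
      simp only [map_add, LinearMap.add_apply, add_smul, Finset.sum_add_distrib]
    map_smul' := by
      intro c x
      simp only [map_smul, LinearMap.smul_apply, smul_eq_mul, RingHom.id_apply, mul_smul,
        ← Finset.smul_sum] }
  have hAinner : ∀ x y, ⟪Al x, y⟫ = Ω x y := by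
    intro x y
    show ⟪∑ i, Ω x (ob i) • ob i, y⟫ = Ω x y
    rw [sum_inner]
    conv_rhs => rw [← ob.sum_repr' y, map_sum]
    refine Finset.sum_congr rfl fun i _ => ?_
    rw [real_inner_smul_left, map_smul, smul_eq_mul, mul_comm]
  have hskew : ∀ x y, ⟪Al x, y⟫ = -⟪x, Al y⟫ := by
    intro x y
    rw [hAinner, antisymm_of_alt Ω halt x y, real_inner_comm, hAinner]
  have hAinj : ∀ x, Al x = 0 → x = 0 := by
    intro x hx
    refine hnd x fun y => ?_
    rw [← hAinner, hx, inner_zero_left]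
  -- the positive operator P = -A²
  let Pl : E →ₗ[ℝ] E := -(Al ∘ₗ Al)
  have hPapp : ∀ x, Pl x = -(Al (Al x)) := fun x => rfl
  have hPP : ∀ x y, ⟪Pl x, y⟫ = ⟪Al x, Al y⟫ := by
    intro x y
    rw [hPapp, inner_neg_left, hskew (Al x) y, neg_neg]
  have hPsym : ∀ x y, ⟪Pl x, y⟫ = ⟪x, Pl y⟫ := by
    intro x y
    rw [hPP, real_inner_comm (Pl y) x, hPP y x, real_inner_comm]
  have hPsym' : Pl.IsSymmetric := fun x y => hPsym x y
  let b := hPsym'.eigenvectorBasis hn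
  let μ : Fin n → ℝ := hPsym'.eigenvalues hn
  have hb : ∀ i, Pl (b i) = μ i • b i := fun i => by
    have := hPsym'.apply_eigenvectorBasis hn i
    exact_mod_cast this
  have hbne : ∀ i, b i ≠ 0 := fun i => by
    intro h
    have := b.orthonormal.1 i
    rw [h] at this; simp at this
  have hμpos : ∀ i, 0 < μ i := by
    intro i
    have h1 : ⟪b i, Pl (b i)⟫ = μ i := by
      rw [hb i, real_inner_smul_right, real_inner_self_eq_norm_sq, b.orthonormal.1 i]
      simp
    have h2 : ⟪b i, Pl (b i)⟫ = ⟪Al (b i), Al (b i)⟫ := by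
      rw [real_inner_comm, hPP]
    have h3 : Al (b i) ≠ 0 := fun h => hbne i (hAinj _ h)
    rw [h2] at h1
    rw [← h1, real_inner_self_eq_norm_sq]
    exact pow_pos (norm_pos_iff.mpr h3) 2
  have hsq : ∀ i, 0 < Real.sqrt (μ i) := fun i => Real.sqrt_pos.mpr (hμpos i)
  have hsq4 : ∀ i, 0 < Real.sqrt (Real.sqrt (μ i)) := fun i => Real.sqrt_pos.mpr (hsq i)
  set Q : E →L[ℝ] E := opD b (fun i => (Real.sqrt (μ i))⁻¹) with hQdef
  set G : E →L[ℝ] E := opD b (fun i => Real.sqrt (μ i)) with hGdef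
  set R : E →L[ℝ] E := opD b (fun i => Real.sqrt (Real.sqrt (μ i))) with hRdef
  set R' : E →L[ℝ] E := opD b (fun i => (Real.sqrt (Real.sqrt (μ i)))⁻¹) with hR'def
  have hQb : ∀ j, Q (b j) = (Real.sqrt (μ j))⁻¹ • b j := fun j => opD_basis b _ j
  have hGb : ∀ j, G (b j) = Real.sqrt (μ j) • b j := fun j => opD_basis b _ j
  have hRb : ∀ j, R (b j) = Real.sqrt (Real.sqrt (μ j)) • b j := fun j => opD_basis b _ j
  have hR'b : ∀ j, R' (b j) = (Real.sqrt (Real.sqrt (μ j)))⁻¹ • b j := fun j => opD_basis b _ j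
  have hQsym : ∀ x y, ⟪Q x, y⟫ = ⟪x, Q y⟫ := opD_symm b _
  have hGsym : ∀ x y, ⟪G x, y⟫ = ⟪x, G y⟫ := opD_symm b _
  have hRsym : ∀ x y, ⟪R x, y⟫ = ⟪x, R y⟫ := opD_symm b _
  let Acl : E →L[ℝ] E := LinearMap.toContinuousLinearMap Al
  let J : E →L[ℝ] E := Acl.comp Q
  have hJapp : ∀ x, J x = Al (Q x) := fun x => rfl
  -- commutation of diagonal operators with Al
  have hcomm : ∀ (g : ℝ → ℝ) (x : E),
      opD b (fun i => g (μ i)) (Al x) = Al (opD b (fun i => g (μ i)) x) := by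
    intro g x
    have h : (opD b (fun i => g (μ i))).comp Acl = Acl.comp (opD b (fun i => g (μ i))) := by
      apply clm_ext_basis b
      intro i
      simp only [ContinuousLinearMap.comp_apply]
      have hev : Pl (Acl (b i)) = μ i • (Acl (b i)) := by
        show Pl (Al (b i)) = μ i • Al (b i)
        have h2 : Pl (Al (b i)) = Al (Pl (b i)) := by
          show -(Al (Al (Al (b i)))) = Al (-(Al (Al (b i))))
          rw [map_neg]
        rw [h2, hb i, map_smul]
      rw [opD_eigen b μ Pl hPsym hb g hev, opD_basis]
      show g (μ i) • Al (b i) = Al (g (μ i) • b i)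
      rw [map_smul]
    have := congrArg (fun T : E →L[ℝ] E => T x) h
    exact this
  have hQA : ∀ x, Q (Al x) = Al (Q x) := hcomm (fun s => (Real.sqrt s)⁻¹)
  have hGA : ∀ x, G (Al x) = Al (G x) := hcomm Real.sqrt
  -- composition identities
  have hGQ : ∀ x, G (Q x) = x := by
    have h : G.comp Q = 1 := by
      apply clm_ext_basis b
      intro i
      simp only [ContinuousLinearMap.comp_apply, ContinuousLinearMap.one_apply]
      rw [hQb, map_smul, hGb, smul_smul, inv_mul_cancel₀ (ne_of_gt (hsq i)), one_smul]
    intro x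
    have := congrArg (fun T : E →L[ℝ] E => T x) h
    simpa using this
  have hPQG : ∀ x, Pl (Q x) = G x := by
    have h : (LinearMap.toContinuousLinearMap Pl).comp Q = G := by
      apply clm_ext_basis b
      intro i
      simp only [ContinuousLinearMap.comp_apply]
      show Pl (Q (b i)) = G (b i)
      have hsc : (Real.sqrt (μ i))⁻¹ * μ i = Real.sqrt (μ i) := by
        rw [inv_mul_eq_div, div_eq_iff (ne_of_gt (hsq i)), Real.mul_self_sqrt (hμpos i).le]
      rw [hQb, map_smul, hb i, smul_smul, hsc, hGb]
    intro x
    have := congrArg (fun T : E →L[ℝ] E => T x) h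
    simpa using this
  have hRRG : ∀ x, R (R x) = G x := by
    have h : R.comp R = G := by
      apply clm_ext_basis b
      intro i
      simp only [ContinuousLinearMap.comp_apply]
      rw [hRb, map_smul, hRb, smul_smul, Real.mul_self_sqrt (Real.sqrt_nonneg _), hGb]
    intro x
    have := congrArg (fun T : E →L[ℝ] E => T x) h
    simpa using this
  have hR'R : ∀ x, R' (R x) = x := by
    have h : R'.comp R = 1 := by
      apply clm_ext_basis b
      intro i
      simp only [ContinuousLinearMap.comp_apply, ContinuousLinearMap.one_apply]
      rw [hRb, map_smul, hR'b, smul_smul, mul_inv_cancel₀ (ne_of_gt (hsq4 i)), one_smul]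
    intro x
    have := congrArg (fun T : E →L[ℝ] E => T x) h
    simpa using this
  have hRR' : ∀ x, R (R' x) = x := by
    have h : R.comp R' = 1 := by
      apply clm_ext_basis b
      intro i
      simp only [ContinuousLinearMap.comp_apply, ContinuousLinearMap.one_apply]
      rw [hR'b, map_smul, hRb, smul_smul, inv_mul_cancel₀ (ne_of_gt (hsq4 i)), one_smul]
    intro x
    have := congrArg (fun T : E →L[ℝ] E => T x) h
    simpa using this
  -- the key identity Ω x (J y) = ⟪R x, R y⟫
  have hg : ∀ x y, Ω x (J y) = ⟪R x, R y⟫ := by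
    intro x y
    rw [← hAinner]
    calc ⟪Al x, J y⟫ = -⟪x, Al (J y)⟫ := hskew _ _
      _ = ⟪x, Pl (Q y)⟫ := by rw [hJapp, hPapp, inner_neg_right]
      _ = ⟪x, G y⟫ := by rw [hPQG]
      _ = ⟪x, R (R y)⟫ := by rw [hRRG]
      _ = ⟪R x, R y⟫ := (hRsym x (R y)).symm
  -- J is a complex structure
  have hJJ : J * J = -1 := by
    apply clm_ext_basis b
    intro i
    show Al (Q (Al (Q (b i)))) = (-1 : E →L[ℝ] E) (b i)
    rw [hQb, map_smul, map_smul, hQA, hQb, map_smul, map_smul, map_smul, smul_smul]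
    have h2 : Al (Al (b i)) = -(μ i • b i) := by rw [← hb i, hPapp, neg_neg]
    rw [h2, smul_neg, smul_smul]
    have h3 : (Real.sqrt (μ i))⁻¹ * (Real.sqrt (μ i))⁻¹ * μ i = 1 := by
      have h4 := Real.mul_self_sqrt (hμpos i).le
      have h5 : (Real.sqrt (μ i))⁻¹ * (Real.sqrt (μ i))⁻¹ * (Real.sqrt (μ i) * Real.sqrt (μ i)) = 1 := by
        field_simp
        rw [div_self (hsq i).ne']
      rw [h4] at h5
      exact h5
    rw [h3, one_smul]
    simp
  have hcompat : ∀ x y, Ω (J x) (J y) = Ω x y := by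
    intro x y
    rw [← hAinner, ← hAinner]
    have h1 : Al (J x) = -(G x) := by
      rw [hJapp, ← hPQG, hPapp, neg_neg]
    rw [h1, inner_neg_left, hJapp]
    have h2 := hskew (G x) (Q y)
    have h3 : Al (G x) = G (Al x) := (hGA x).symm
    have h4 := hGsym (Al x) (Q y)
    rw [h3] at h2
    have h5 : G (Q y) = y := hGQ y
    rw [h5] at h4
    linarith [h2, h4]
  have hpos : ∀ x, x ≠ 0 → 0 < Ω x (J x) := by
    intro x hx
    rw [hg]
    have hR0 : R x ≠ 0 := fun h => hx (by rw [← hR'R x, h, map_zero])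
    rw [real_inner_self_eq_norm_sq]
    exact pow_pos (norm_pos_iff.mpr hR0) 2
  exact ⟨J, R, R', ⟨hJJ, hcompat, hpos⟩, hR'R, hRR', hg⟩
lemma opD_cont {n : ℕ} (b : OrthonormalBasis (Fin n) ℝ E) {X : Type*} [TopologicalSpace X]
    (c : X → Fin n → ℝ) (hc : ∀ i, Continuous fun t => c t i) :
    Continuous fun t => opD b (c t) := by
  unfold opD
  exact continuous_finset_sum _ fun i _ => (hc i).smul continuous_const

lemma stepC {n : ℕ} (hn : Module.finrank ℝ E = n) (Ω : E →ₗ[ℝ] E →ₗ[ℝ] ℝ)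
    (halt : ∀ x, Ω x x = 0) (J : E →L[ℝ] E)
    (hJ : J * J = -1 ∧ (∀ x y, Ω (J x) (J y) = Ω x y) ∧ ∀ x, x ≠ 0 → 0 < Ω x (J x))
    (hg : ∀ x y, Ω x (J y) = ⟪x, y⟫) :
    IsPathConnected {K : E →L[ℝ] E |
      K * K = -1 ∧ (∀ x y, Ω (K x) (K y) = Ω x y) ∧ ∀ x, x ≠ 0 → 0 < Ω x (K x)} := by
  refine ⟨J, hJ, ?_⟩
  intro K hK
  obtain ⟨hK1, hK2, hK3⟩ := hK
  have hJ2 : ∀ x, J (J x) = -x := by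
    intro x
    have := congrArg (fun T : E →L[ℝ] E => T x) hJ.1
    simpa [ContinuousLinearMap.mul_apply] using this
  have hK2' : ∀ x, K (K x) = -x := by
    intro x
    have := congrArg (fun T : E →L[ℝ] E => T x) hK1
    simpa [ContinuousLinearMap.mul_apply] using this
  -- Ω in terms of inner and J
  have hΩJ : ∀ u v, Ω u v = -⟪u, J v⟫ := by
    intro u v
    have h1 : J (-(J v)) = v := by rw [map_neg, hJ2, neg_neg]
    calc Ω u v = Ω u (J (-(J v))) := by rw [h1]
      _ = ⟪u, -(J v)⟫ := hg u _
      _ = -⟪u, J v⟫ := inner_neg_right _ _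
  -- the positive symmetric operator A = -J∘K
  let Acl : E →L[ℝ] E := -(J.comp K)
  let Al : E →ₗ[ℝ] E := ↑Acl
  have hAapp : ∀ x, Al x = -(J (K x)) := fun x => rfl
  have hJA : ∀ x, J (Al x) = K x := by
    intro x
    rw [hAapp, map_neg, hJ2, neg_neg]
  have hinner : ∀ x y, ⟪x, Al y⟫ = Ω x (K y) := by
    intro x y
    rw [← hg x (Al y), hJA]
  have hsym : ∀ x y, ⟪Al x, y⟫ = ⟪x, Al y⟫ := by
    intro x y
    rw [real_inner_comm, hinner y x, hinner x y]
    -- Ω y (K x) = Ω x (K y)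
    have h1 : Ω (K y) (K (K x)) = Ω y (K x) := hK2 y (K x)
    rw [hK2' x] at h1
    have h2 : Ω (K y) (-x) = - Ω (K y) x := by rw [map_neg]
    rw [h2] at h1
    rw [← h1, antisymm_of_alt Ω halt (K y) x, neg_neg]
  have hsym' : Al.IsSymmetric := fun x y => hsym x y
  set b := hsym'.eigenvectorBasis hn with hbdef
  set μ : Fin n → ℝ := hsym'.eigenvalues hn with hμdef
  have hb : ∀ i, Al (b i) = μ i • b i := fun i => by
    have := hsym'.apply_eigenvectorBasis hn i
    exact_mod_cast this
  have hbne : ∀ i, b i ≠ 0 := fun i => by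
    intro h
    have := b.orthonormal.1 i
    rw [h] at this; simp at this
  have hμpos : ∀ i, 0 < μ i := by
    intro i
    have h1 : ⟪b i, Al (b i)⟫ = μ i := by
      rw [hb i, real_inner_smul_right, real_inner_self_eq_norm_sq, b.orthonormal.1 i]
      simp
    rw [hinner] at h1
    rw [← h1]
    exact hK3 (b i) (hbne i)
  -- eigenvectors of A are mapped by J to eigenvectors with inverse eigenvalue
  have hAJ : ∀ i, Al (J (b i)) = (μ i)⁻¹ • J (b i) := by
    intro i
    have h1 : Al (J (Al (b i))) = J (b i) := by
      rw [hJA, hAapp, hK2', map_neg, neg_neg]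
    rw [hb i, map_smul, map_smul] at h1
    have h3 := congrArg (fun z => (μ i)⁻¹ • z) h1
    simp only [smul_smul, inv_mul_cancel₀ (hμpos i).ne', one_smul] at h3
    exact h3
  -- the path of operators
  set M : ℝ → E →L[ℝ] E := fun t => opD b (fun i => (μ i) ^ t) with hMdef
  have hMb : ∀ t i, M t (b i) = (μ i) ^ t • b i := fun t i => opD_basis b _ i
  have hMsym : ∀ t x y, ⟪M t x, y⟫ = ⟪x, M t y⟫ := fun t => opD_symm b _
  have hMJ : ∀ t i, M t (J (b i)) = (μ i) ^ (-t) • J (b i) := by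
    intro t i
    have h0 : M t (J (b i)) = ((μ i)⁻¹) ^ t • J (b i) :=
      opD_eigen b μ Al hsym hb (fun s => s ^ t) (hAJ i)
    have h2 : ((μ i)⁻¹) ^ t = (μ i) ^ (-t) := by
      rw [Real.inv_rpow (hμpos i).le, Real.rpow_neg (hμpos i).le]
    rw [h0, h2]
  have hJM : ∀ t x, J (M t x) = M (-t) (J x) := by
    intro t x
    have h : J.comp (M t) = (M (-t)).comp J := by
      apply clm_ext_basis b
      intro i
      simp only [ContinuousLinearMap.comp_apply]
      rw [hMb, map_smul, hMJ, neg_neg]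
    have := congrArg (fun T : E →L[ℝ] E => T x) h
    simpa using this
  have hMM : ∀ s t x, M s (M t x) = M (s + t) x := by
    intro s t x
    have h : (M s).comp (M t) = M (s + t) := by
      apply clm_ext_basis b
      intro i
      simp only [ContinuousLinearMap.comp_apply]
      rw [hMb, map_smul, hMb, hMb, smul_smul, ← Real.rpow_add (hμpos i)]
      ring_nf
    have := congrArg (fun T : E →L[ℝ] E => T x) h
    simpa using this
  have hM0 : ∀ x, M 0 x = x := by
    intro x
    have h : M 0 = 1 := by
      apply clm_ext_basis b
      intro i
      rw [hMb, Real.rpow_zero, one_smul, ContinuousLinearMap.one_apply]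
    rw [h]; rfl
  have hM1A : ∀ x, M 1 x = Al x := by
    intro x
    have h : M 1 = Acl := by
      apply clm_ext_basis b
      intro i
      rw [hMb, Real.rpow_one, ← hb i]; rfl
    rw [h]; rfl
  have hMinj : ∀ t x, M t x = 0 → x = 0 := by
    intro t x hx
    have h := hMM (-t) t x
    rw [hx, map_zero, neg_add_cancel] at h
    rw [← hM0 x, ← h]
  -- continuity
  have hMcont : Continuous fun t : ℝ => M t := by
    apply opD_cont
    intro i
    have h : (fun t : ℝ => μ i ^ t) = fun t => Real.exp (Real.log (μ i) * t) := by
      funext t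
      rw [Real.rpow_def_of_pos (hμpos i)]
    rw [h]
    exact Real.continuous_exp.comp (continuous_const.mul continuous_id)
  set γfun : ℝ → E →L[ℝ] E := fun t => J.comp (M t) with hγdef
  have hγcont : Continuous γfun := Continuous.clm_comp continuous_const hMcont
  have hγapp : ∀ t x, γfun t x = J (M t x) := fun t x => rfl
  have hγmem : ∀ t, γfun t ∈ {K : E →L[ℝ] E |
      K * K = -1 ∧ (∀ x y, Ω (K x) (K y) = Ω x y) ∧ ∀ x, x ≠ 0 → 0 < Ω x (K x)} := by
    intro t
    refine ⟨?_, ?_, ?_⟩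
    · apply ContinuousLinearMap.ext
      intro x
      simp only [ContinuousLinearMap.mul_apply, ContinuousLinearMap.neg_apply,
        ContinuousLinearMap.one_apply]
      rw [hγapp, hγapp, hJM t x, hMM t (-t) (J x), add_neg_cancel, hM0, hJ2]
    · intro x y
      rw [hγapp, hγapp, hJ.2.1, hΩJ (M t x) (M t y), hJM t y,
        ← hMsym (-t) (M t x) (J y), hMM (-t) t x, neg_add_cancel, hM0, ← hΩJ x y]
    · intro x hx
      rw [hγapp, hg x (M t x)]
      have hsplit : M t x = M (t/2) (M (t/2) x) := by rw [hMM, add_halves]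
      rw [hsplit, ← hMsym (t/2) x (M (t/2) x)]
      have hne : M (t/2) x ≠ 0 := fun h => hx (hMinj _ _ h)
      rw [real_inner_self_eq_norm_sq]
      exact pow_pos (norm_pos_iff.mpr hne) 2
  have hγ0 : γfun 0 = J := by
    apply ContinuousLinearMap.ext; intro x
    rw [hγapp, hM0]
  have hγ1 : γfun 1 = K := by
    apply ContinuousLinearMap.ext; intro x
    rw [hγapp, hM1A, hJA]
  exact ⟨⟨⟨fun t => γfun t, hγcont.comp continuous_subtype_val⟩,
    by simpa using hγ0, by simpa using hγ1⟩, fun t => hγmem t⟩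
lemma mem_helper {V W : Type*} [NormedAddCommGroup V] [NormedSpace ℝ V]
    [NormedAddCommGroup W] [NormedSpace ℝ W]
    (f : V ≃L[ℝ] W) (ω : V →ₗ[ℝ] V →ₗ[ℝ] ℝ) (ω' : W →ₗ[ℝ] W →ₗ[ℝ] ℝ)
    (hωω' : ∀ x y, ω' x y = ω (f.symm x) (f.symm y))
    (J' : W →L[ℝ] W)
    (h1 : J' * J' = -1) (h2 : ∀ x y, ω' (J' x) (J' y) = ω' x y)
    (h3 : ∀ x, x ≠ 0 → 0 < ω' x (J' x)) :
    ((f.symm : W →L[ℝ] V).comp (J'.comp (f : V →L[ℝ] W))) *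
      ((f.symm : W →L[ℝ] V).comp (J'.comp (f : V →L[ℝ] W))) = -1 ∧
    (∀ x y, ω (((f.symm : W →L[ℝ] V).comp (J'.comp (f : V →L[ℝ] W))) x)
        (((f.symm : W →L[ℝ] V).comp (J'.comp (f : V →L[ℝ] W))) y) = ω x y) ∧
    ∀ x, x ≠ 0 → 0 < ω x (((f.symm : W →L[ℝ] V).comp (J'.comp (f : V →L[ℝ] W))) x) := by
  have hJ'2 : ∀ z, J' (J' z) = -z := fun z => by
    have := congrArg (fun T : W →L[ℝ] W => T z) h1
    simpa using this
  have happ : ∀ x, ((f.symm : W →L[ℝ] V).comp (J'.comp (f : V →L[ℝ] W))) x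
      = f.symm (J' (f x)) := fun x => rfl
  refine ⟨?_, ?_, ?_⟩
  · apply ContinuousLinearMap.ext
    intro x
    simp only [ContinuousLinearMap.mul_apply, happ, ContinuousLinearMap.neg_apply,
      ContinuousLinearMap.one_apply]
    rw [f.apply_symm_apply, hJ'2, map_neg, f.symm_apply_apply]
  · intro x y
    rw [happ, happ]
    have e1 : ω (f.symm (J' (f x))) (f.symm (J' (f y)))
        = ω' (J' (f x)) (J' (f y)) := (hωω' _ _).symm
    rw [e1, h2, hωω', f.symm_apply_apply, f.symm_apply_apply]
  · intro x hx
    rw [happ]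
    have e1 : ω x (f.symm (J' (f x))) = ω' (f x) (J' (f x)) := by
      rw [hωω', f.symm_apply_apply]
    rw [e1]
    exact h3 (f x) (fun h => hx (by rw [← f.symm_apply_apply x, h, map_zero]))

end Aux

/-- Let `ω` be a nondegenerate alternating bilinear form on a
finite-dimensional real vector space `V`.  Then the set of `ω`-calibrated complex
structures `{J : J² = −1, ω(J·,J·) = ω, ω(x, Jx) > 0 for x ≠ 0}` is path-connected. -/
theorem stmt10 {V : Type*} [NormedAddCommGroup V] [NormedSpace ℝ V]
    [FiniteDimensional ℝ V]
    (ω : V →ₗ[ℝ] V →ₗ[ℝ] ℝ) (halt : ∀ x : V, ω x x = 0)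
    (hnd : ∀ x : V, (∀ y : V, ω x y = 0) → x = 0) :
    IsPathConnected {J : V →L[ℝ] V |
      J * J = -1 ∧ (∀ x y : V, ω (J x) (J y) = ω x y) ∧
      ∀ x : V, x ≠ 0 → 0 < ω x (J x)} := by
  classical
  let E := EuclideanSpace ℝ (Fin (Module.finrank ℝ V))
  let e1 : V ≃L[ℝ] E := toEuclidean
  let Ω1 : E →ₗ[ℝ] E →ₗ[ℝ] ℝ :=
    ω.compl₁₂ (e1.symm : E →L[ℝ] V).toLinearMap (e1.symm : E →L[ℝ] V).toLinearMap
  have hΩ1 : ∀ x y, Ω1 x y = ω (e1.symm x) (e1.symm y) := fun x y => rfl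
  have hΩ1alt : ∀ x, Ω1 x x = 0 := fun x => halt _
  have hΩ1nd : ∀ x, (∀ y, Ω1 x y = 0) → x = 0 := by
    intro x hx
    have h1 : e1.symm x = 0 := by
      refine hnd _ (fun y => ?_)
      have := hx (e1 y)
      rwa [hΩ1, e1.symm_apply_apply] at this
    have h2 := congrArg e1 h1
    rwa [e1.apply_symm_apply, map_zero] at h2
  obtain ⟨J0, R, R', ⟨hJ0a, hJ0b, hJ0c⟩, hR'R, hRR', hg0⟩ := stepA rfl Ω1 hΩ1alt hΩ1nd
  let fR : E ≃L[ℝ] E := ContinuousLinearEquiv.equivOfInverse R R' hR'R hRR'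
  let f : V ≃L[ℝ] E := e1.trans fR
  let Ω2 : E →ₗ[ℝ] E →ₗ[ℝ] ℝ :=
    ω.compl₁₂ (f.symm : E →L[ℝ] V).toLinearMap (f.symm : E →L[ℝ] V).toLinearMap
  have hΩ2 : ∀ x y, Ω2 x y = ω (f.symm x) (f.symm y) := fun x y => rfl
  have hΩ2' : ∀ x y, Ω2 x y = Ω1 (fR.symm x) (fR.symm y) := fun x y => rfl
  have hΩ2alt : ∀ x, Ω2 x x = 0 := fun x => halt _
  have hω12 : ∀ x y, Ω1 x y = Ω2 (fR.symm.symm x) (fR.symm.symm y) := by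
    intro x y
    rw [ContinuousLinearEquiv.symm_symm, hΩ2' (fR x) (fR y), fR.symm_apply_apply,
      fR.symm_apply_apply]
  have hmem2 := mem_helper fR.symm Ω2 Ω1 hω12 J0 hJ0a hJ0b hJ0c
  set J2 : E →L[ℝ] E :=
    ((fR.symm.symm : E →L[ℝ] E).comp (J0.comp (fR.symm : E →L[ℝ] E))) with hJ2def
  have hgJ2 : ∀ x y, Ω2 x (J2 y) = ⟪x, y⟫ := by
    intro x y
    rw [hΩ2']
    have h1 : fR.symm (J2 y) = J0 (fR.symm y) := by
      show R' (R (J0 (R' y))) = J0 (R' y)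
      rw [hR'R]
    rw [h1, hg0 (fR.symm x) (fR.symm y)]
    show ⟪R (R' x), R (R' y)⟫ = ⟪x, y⟫
    rw [hRR', hRR']
  have hpc2 := stepC rfl Ω2 hΩ2alt J2 hmem2 hgJ2
  have hΦcont : Continuous fun X : E →L[ℝ] E =>
      (f.symm : E →L[ℝ] V).comp (X.comp (f : V →L[ℝ] E)) :=
    Continuous.clm_comp continuous_const (Continuous.clm_comp continuous_id continuous_const)
  have himage := hpc2.image hΦcont
  have hsets : {J : V →L[ℝ] V | J * J = -1 ∧ (∀ x y : V, ω (J x) (J y) = ω x y) ∧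
      ∀ x : V, x ≠ 0 → 0 < ω x (J x)} =
      (fun X : E →L[ℝ] E => (f.symm : E →L[ℝ] V).comp (X.comp (f : V →L[ℝ] E))) ''
        {K : E →L[ℝ] E | K * K = -1 ∧ (∀ x y, Ω2 (K x) (K y) = Ω2 x y) ∧
          ∀ x, x ≠ 0 → 0 < Ω2 x (K x)} := by
    ext J
    constructor
    · intro hJ
      refine ⟨(f.symm.symm : V →L[ℝ] E).comp (J.comp (f.symm : E →L[ℝ] V)), ?_, ?_⟩
      · have hω' : ∀ x y, ω x y = Ω2 (f.symm.symm x) (f.symm.symm y) := by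
          intro x y
          rw [ContinuousLinearEquiv.symm_symm, hΩ2, f.symm_apply_apply, f.symm_apply_apply]
        exact mem_helper f.symm Ω2 ω hω' J hJ.1 hJ.2.1 hJ.2.2
      · apply ContinuousLinearMap.ext
        intro x
        show f.symm (f.symm.symm (J (f.symm (f x)))) = J x
        rw [ContinuousLinearEquiv.symm_symm, f.symm_apply_apply, f.symm_apply_apply]
    · rintro ⟨K, hK, rfl⟩
      exact mem_helper f ω Ω2 hΩ2 K hK.1 hK.2.1 hK.2.2
  rw [hsets]
  exact himage
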